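/- Define T_n = ∑_{j=1}^{⌈n/2⌉} (-1)^{j-1} · j · C(n-j+1, j) and p_n = ∑_{j=1}^{⌈n/2⌉} (-1)^{j-1} · C(n-j+1, j). Then for all n ≥ 1, T_{n+2} - T_{n+1} + T_n = 1 - p_n. -/

import Mathlib

open Finset

/-- `T n = ∑_{j=1}^{⌈n/2⌉} (-1)^{j-1} j C(n-j+1, j)`. -/
def TAlt (n : ℕ) : ℤ :=
  ∑ j ∈ Finset.Icc 1 ((n + 1) / 2), (-1 : ℤ) ^ (j - 1) * j * ((n - j + 1).choose j)

/-- `p n = ∑_{j=1}^{⌈n/2⌉} (-1)^{j-1} C(n-j+1, j)`. -/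
def pAlt (n : ℕ) : ℤ :=
  ∑ j ∈ Finset.Icc 1 ((n + 1) / 2), (-1 : ℤ) ^ (j - 1) * ((n - j + 1).choose j)

lemma vanish (n j : ℕ) (hn : 1 ≤ n) (h2 : n + 2 ≤ 2*j) : (n - j + 1).choose j = 0 := by
  rcases le_or_gt j (n+1) with h | h
  · apply Nat.choose_eq_zero_of_lt; omega
  · have h1 : n - j + 1 = 1 := by omega
    rw [h1]; apply Nat.choose_eq_zero_of_lt; omega

lemma Text (n N : ℕ) (hn : 1 ≤ n) (hN : (n+1)/2 ≤ N) :
    TAlt n = ∑ j ∈ Icc 1 N, (-1:ℤ)^(j-1) * j * ((n - j + 1).choose j) := by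
  unfold TAlt
  apply Finset.sum_subset (Finset.Icc_subset_Icc_right hN)
  intro j hj hj2
  simp only [mem_Icc] at hj hj2
  have : (n - j + 1).choose j = 0 := vanish n j hn (by omega)
  simp [this]

lemma pext (n N : ℕ) (hn : 1 ≤ n) (hN : (n+1)/2 ≤ N) :
    pAlt n = ∑ j ∈ Icc 1 N, (-1:ℤ)^(j-1) * ((n - j + 1).choose j) := by
  unfold pAlt
  apply Finset.sum_subset (Finset.Icc_subset_Icc_right hN)
  intro j hj hj2
  simp only [mem_Icc] at hj hj2
  have : (n - j + 1).choose j = 0 := vanish n j hn (by omega)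
  simp [this]

theorem stmt_10 (n : ℕ) (hn : 1 ≤ n) :
    TAlt (n + 2) - TAlt (n + 1) + TAlt n = 1 - pAlt n := by
  have key : TAlt (n+2) - TAlt (n+1) = 1 - TAlt n - pAlt n := by
    rw [Text (n+2) (n+2) (by omega) (by omega), Text (n+1) (n+2) (by omega) (by omega),
        Text n (n+1) hn (by omega), pext n (n+1) hn (by omega)]
    simp only [← Finset.Ico_add_one_right_eq_Icc]
    rw [Finset.sum_Ico_eq_sum_range, Finset.sum_Ico_eq_sum_range,
        Finset.sum_Ico_eq_sum_range, Finset.sum_Ico_eq_sum_range]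
    simp only [Nat.succ_sub_one, Nat.add_sub_cancel]
    -- sums over range (n+2) and range (n+1), index k, j = 1 + k
    have h2 : ∑ k ∈ Finset.range (n+2),
        (-1:ℤ)^((1+k)-1) * ((1+k : ℕ) : ℤ) * ((n + 2 - (1+k) + 1).choose (1+k))
        = ∑ k ∈ Finset.range (n+2),
        ((-1:ℤ)^k * (1+k) * ((n+1-k).choose (1+k))
          + (-1:ℤ)^k * (1+k) * ((n+1-k).choose k)) := by
      apply Finset.sum_congr rfl
      intro k hk
      simp only [Finset.mem_range] at hk
      have e1 : (1+k) - 1 = k := by omega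
      have e2 : n + 2 - (1+k) + 1 = (n + 1 - k) + 1 := by omega
      have e3 : 1 + k = k + 1 := by omega
      rw [e1, e2, e3, Nat.choose_succ_succ]
      push_cast
      ring
    rw [h2, Finset.sum_add_distrib]
    have h1 : ∑ k ∈ Finset.range (n+2),
        (-1:ℤ)^((1+k)-1) * ((1+k : ℕ) : ℤ) * ((n + 1 - (1+k) + 1).choose (1+k))
        = ∑ k ∈ Finset.range (n+2),
        (-1:ℤ)^k * (1+k) * ((n+1-k).choose (1+k)) := by
      apply Finset.sum_congr rfl
      intro k hk
      simp only [Finset.mem_range] at hk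
      have e1 : (1+k) - 1 = k := by omega
      rcases le_or_gt (k+1) (n+1) with h | h
      · have e2 : n + 1 - (1+k) + 1 = n + 1 - k := by omega
        rw [e1, e2]; push_cast; ring
      · have hk1 : k = n + 1 := by omega
        subst hk1
        have z1 : (n + 1 - (1+(n+1)) + 1).choose (1+(n+1)) = 0 := by
          apply Nat.choose_eq_zero_of_lt; omega
        have z2 : (n + 1 - (n+1)).choose (1+(n+1)) = 0 := by
          apply Nat.choose_eq_zero_of_lt; omega
        rw [e1, z1, z2]; simp
    rw [h1]
    have split : ∑ k ∈ Finset.range (n+2),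
        (-1:ℤ)^k * (1+k) * ((n+1-k).choose k)
        = (∑ k ∈ Finset.range (n+1),
            (-1:ℤ)^(k+1) * (1+(k+1)) * ((n+1-(k+1)).choose (k+1))) + 1 := by
      rw [Finset.sum_range_succ']
      norm_num
    have inner : ∑ k ∈ Finset.range (n+1),
        (-1:ℤ)^(k+1) * (1+(k+1)) * ((n+1-(k+1)).choose (k+1))
        = ∑ k ∈ Finset.range (n+1),
          (-((-1:ℤ)^k * (1+k) * ((n - k).choose (k+1)))
            - (-1:ℤ)^k * ((n - k).choose (k+1))) := by
      apply Finset.sum_congr rfl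
      intro k hk
      simp only [Finset.mem_range] at hk
      have e2 : n + 1 - (k+1) = n - k := by omega
      rw [e2, pow_succ]
      ring
    have hT0 : ∑ k ∈ Finset.range (n+1),
        (-1:ℤ)^((1+k)-1) * ((1+k : ℕ) : ℤ) * ((n - (1+k) + 1).choose (1+k))
        = ∑ k ∈ Finset.range (n+1),
        (-1:ℤ)^k * (1+k) * ((n-k).choose (k+1)) := by
      apply Finset.sum_congr rfl
      intro k hk
      simp only [Finset.mem_range] at hk
      have e1 : (1+k) - 1 = k := by omega
      rcases le_or_gt (k+1) n with h | h
      · have e2 : n - (1+k) + 1 = n - k := by omega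
        have e3 : 1 + k = k + 1 := by omega
        rw [e1, e2, e3]; push_cast; ring
      · have hk1 : k = n := by omega
        rw [hk1]
        have z1 : (n - (1+n) + 1).choose (1+n) = 0 := by
          apply Nat.choose_eq_zero_of_lt; omega
        have z2 : (n - n).choose (n+1) = 0 := by
          apply Nat.choose_eq_zero_of_lt; omega
        rw [z1, z2]; simp
    have hp0 : ∑ k ∈ Finset.range (n+1),
        (-1:ℤ)^((1+k)-1) * ((n - (1+k) + 1).choose (1+k))
        = ∑ k ∈ Finset.range (n+1),
        (-1:ℤ)^k * ((n-k).choose (k+1)) := by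
      apply Finset.sum_congr rfl
      intro k hk
      simp only [Finset.mem_range] at hk
      have e1 : (1+k) - 1 = k := by omega
      rcases le_or_gt (k+1) n with h | h
      · have e2 : n - (1+k) + 1 = n - k := by omega
        have e3 : 1 + k = k + 1 := by omega
        rw [e1, e2, e3]
      · have hk1 : k = n := by omega
        rw [hk1]
        have z1 : (n - (1+n) + 1).choose (1+n) = 0 := by
          apply Nat.choose_eq_zero_of_lt; omega
        have z2 : (n - n).choose (n+1) = 0 := by
          apply Nat.choose_eq_zero_of_lt; omega
        rw [z1, z2]; simp
    rw [split, inner, hT0, hp0, Finset.sum_sub_distrib]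
    simp only [Finset.sum_neg_distrib]
    ring
  linarith
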